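/- Let -1 ≤ y_0 < y_1 < ... < y_M ≤ 1 be distinct real points with Lagrange basis polynomials ℓ_{j,M}, let a, b ∈ ℝ with a ≠ b, and let c_0, ..., c_{M+2} ∈ ℝ. For j = 0, ..., M define B_j(x) = ∂_x^{-2}ℓ_{j,M}(x) - (bx/(b-a))·∫_{-1}^{1} ∂_t^{-1}ℓ_{j,M}(t) dt + ((a+b)x/(2(b-a)) - 1/2)·∫_{-1}^{1} ∂_t^{-2}ℓ_{j,M}(t) dt, and define B_{M+1}(x) = x/(b-a) and B_{M+2}(x) = 1/2 - (a+b)x/(2(b-a)). Then p(x) = Σ_{j=0}^{M+2} c_j·B_j(x) is a polynomial of degree at most M+2 satisfying p''(y_j) = c_j for j = 0, ..., M, a·p(-1) + b·p(1) = c_{M+1}, and ∫_{-1}^{1} p(x) dx = c_{M+2}. -/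

import Mathlib

open Polynomial

noncomputable def antider (p : ℝ[X]) : ℝ[X] := p.sum fun n c => C (c / (n + 1)) * X ^ (n + 1)

lemma derivative_antider (p : ℝ[X]) : derivative (antider p) = p := by
  unfold antider
  rw [Polynomial.sum, map_sum]
  conv_rhs => rw [← p.sum_C_mul_X_pow_eq, Polynomial.sum]
  refine Finset.sum_congr rfl fun n _ => ?_
  rw [derivative_C_mul, derivative_X_pow]
  have hne : ((n : ℝ) + 1) ≠ 0 := by positivity
  push_cast
  rw [← mul_assoc, ← C_mul, div_mul_cancel₀ _ hne]

lemma natDegree_antider_le (p : ℝ[X]) : (antider p).natDegree ≤ p.natDegree + 1 := by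
  unfold antider
  rw [Polynomial.sum]
  refine natDegree_sum_le_of_forall_le _ _ fun n hn => ?_
  refine (natDegree_C_mul_le _ _).trans ?_
  simpa using Nat.add_le_add_right (le_natDegree_of_mem_supp n hn) 1

lemma poly_integral (p : ℝ[X]) (u v : ℝ) :
    (∫ t in u..v, p.eval t) = (antider p).eval v - (antider p).eval u := by
  refine intervalIntegral.integral_eq_sub_of_hasDerivAt
    (f := fun x => (antider p).eval x) (fun x _ => ?_) ?_
  · simpa [derivative_antider] using (antider p).hasDerivAt x
  · exact (p.continuous_aeval).intervalIntegrable u v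

noncomputable def Fint (p : ℝ[X]) : ℝ[X] := antider p - C ((antider p).eval (-1))

lemma eval_Fint (p : ℝ[X]) (x : ℝ) : (Fint p).eval x = ∫ t in (-1:ℝ)..x, p.eval t := by
  simp [Fint, poly_integral]

lemma derivative_Fint (p : ℝ[X]) : derivative (Fint p) = p := by
  simp [Fint, derivative_antider]

lemma natDegree_Fint_le (p : ℝ[X]) : (Fint p).natDegree ≤ p.natDegree + 1 :=
  (natDegree_sub_le _ _).trans (max_le (natDegree_antider_le p) (by simp))


/-- the function `p = Σ c_j B_j` built from the second-order
Birkhoff-type basis polynomials is a polynomial of degree at most `M+2`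
solving the second-order Birkhoff-type interpolation problem with constraints
`a·p(-1) + b·p(1) = c_{M+1}` and `∫_{-1}^1 p = c_{M+2}`. -/
theorem stmt_18 (M : ℕ) (y : Fin (M + 1) → ℝ)
    (hy : StrictMono y) (hy0 : -1 ≤ y 0) (hyM : y (Fin.last M) ≤ 1)
    (ℓ : Fin (M + 1) → Polynomial ℝ)
    (hdeg : ∀ j, (ℓ j).natDegree ≤ M)
    (hval : ∀ i j, (ℓ j).eval (y i) = if i = j then 1 else 0)
    (a b : ℝ) (hab : a ≠ b)
    (c : Fin (M + 1) → ℝ) (cM1 cM2 : ℝ)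
    (B : Fin (M + 1) → ℝ → ℝ)
    (hB : ∀ j x, B j x =
      (∫ t in (-1 : ℝ)..x, ∫ s in (-1 : ℝ)..t, (ℓ j).eval s) -
        (b * x / (b - a)) *
          (∫ t in (-1 : ℝ)..1, ∫ s in (-1 : ℝ)..t, (ℓ j).eval s) +
        ((a + b) * x / (2 * (b - a)) - 1 / 2) *
          (∫ t in (-1 : ℝ)..1, ∫ s in (-1 : ℝ)..t, ∫ r in (-1 : ℝ)..s, (ℓ j).eval r)) :
    ∃ q : Polynomial ℝ,
      (∀ x : ℝ, q.eval x =
        (∑ j : Fin (M + 1), c j * B j x) +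
          cM1 * (x / (b - a)) +
          cM2 * (1 / 2 - (a + b) * x / (2 * (b - a)))) ∧
      q.natDegree ≤ M + 2 ∧
      (∀ j, (Polynomial.derivative (Polynomial.derivative q)).eval (y j) = c j) ∧
      (a * q.eval (-1) + b * q.eval 1 = cM1) ∧
      ((∫ x in (-1 : ℝ)..1, q.eval x) = cM2) := by
  have hba : b - a ≠ 0 := sub_ne_zero_of_ne (Ne.symm hab)
  set al : Fin (M + 1) → ℝ := fun j => (Fint (Fint (ℓ j))).eval 1 with hal
  set be : Fin (M + 1) → ℝ := fun j => (Fint (Fint (Fint (ℓ j)))).eval 1 with hbe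
  set P : Fin (M + 1) → ℝ[X] := fun j =>
    Fint (Fint (ℓ j)) - C (b * al j / (b - a)) * X +
      (C ((a + b) * be j / (2 * (b - a))) * X - C (be j / 2)) with hP
  set q : ℝ[X] := (∑ j, C (c j) * P j) + C (cM1 / (b - a)) * X +
      (C (cM2 / 2) - C (cM2 * (a + b) / (2 * (b - a))) * X) with hq
  have hF2eval : ∀ j x, (Fint (Fint (ℓ j))).eval x
      = ∫ t in (-1:ℝ)..x, ∫ s in (-1:ℝ)..t, (ℓ j).eval s := by
    intro j x
    rw [eval_Fint]
    exact intervalIntegral.integral_congr fun t _ => eval_Fint (ℓ j) t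
  have hF3eval : ∀ j, (Fint (Fint (Fint (ℓ j)))).eval 1
      = ∫ t in (-1:ℝ)..1, ∫ s in (-1:ℝ)..t, ∫ r in (-1:ℝ)..s, (ℓ j).eval r := by
    intro j
    rw [eval_Fint]
    exact intervalIntegral.integral_congr fun t _ => hF2eval j t
  have hBP : ∀ j x, B j x = (P j).eval x := by
    intro j x
    rw [hB, ← hF2eval j x, ← hF2eval j 1, ← hF3eval j]
    simp only [hP, eval_add, eval_sub, eval_mul, eval_C, eval_X, hal, hbe]
    ring
  have key : ∀ x : ℝ, q.eval x = (∑ j, c j * (P j).eval x) +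
      (cM1 * (x / (b - a)) + cM2 * (1 / 2 - (a + b) * x / (2 * (b - a)))) := by
    intro x
    simp only [hq, eval_add, eval_sub, eval_mul, eval_C, eval_X, eval_finset_sum]
    ring
  refine ⟨q, ?_, ?_, ?_, ?_, ?_⟩
  · intro x
    rw [key]
    simp only [hBP]
    ring
  · -- degree bound
    have hPdeg : ∀ j, (P j).natDegree ≤ M + 2 := by
      intro j
      have h1 : (Fint (Fint (ℓ j))).natDegree ≤ M + 2 :=
        (natDegree_Fint_le _).trans (Nat.add_le_add_right
          ((natDegree_Fint_le _).trans (Nat.add_le_add_right (hdeg j) 1)) 1)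
      have hCX : ∀ r : ℝ, (C r * X).natDegree ≤ M + 2 :=
        fun r => (natDegree_C_mul_le _ _).trans (by simp)
      rw [hP]
      refine (natDegree_add_le _ _).trans (max_le
        ((natDegree_sub_le _ _).trans (max_le h1 (hCX _)))
        ((natDegree_sub_le _ _).trans (max_le (hCX _) (by simp))))
    rw [hq]
    refine (natDegree_add_le _ _).trans (max_le ((natDegree_add_le _ _).trans (max_le ?_ ?_)) ?_)
    · exact natDegree_sum_le_of_forall_le _ _ fun j _ =>
        (natDegree_C_mul_le _ _).trans (hPdeg j)
    · exact (natDegree_C_mul_le _ _).trans (by simp)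
    · exact (natDegree_sub_le _ _).trans (max_le (by simp)
        ((natDegree_C_mul_le _ _).trans (by simp)))
  · -- second derivative interpolation
    have hq2 : derivative (derivative q) = ∑ j, C (c j) * ℓ j := by
      simp only [hq, hP, derivative_add, derivative_sub, derivative_C_mul, derivative_X,
        derivative_C, derivative_Fint, map_sum, mul_one, mul_zero, sub_zero, add_zero,
        zero_sub, derivative_neg, neg_zero, derivative_one]
    intro i
    rw [hq2]
    simp [eval_finset_sum, hval, mul_ite]
  · -- L1 functional
    have hP1 : ∀ j, a * (P j).eval (-1) + b * (P j).eval 1 = 0 := by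
      intro j
      have h0 : (Fint (Fint (ℓ j))).eval (-1) = 0 := by
        rw [eval_Fint, intervalIntegral.integral_same]
      have h1 : (Fint (Fint (ℓ j))).eval 1 = al j := by rw [hal]
      simp only [hP, eval_add, eval_sub, eval_mul, eval_C, eval_X, h0, h1]
      field_simp
      ring
    have h1 : a * (∑ j, c j * (P j).eval (-1)) + b * (∑ j, c j * (P j).eval 1) = 0 := by
      rw [Finset.mul_sum, Finset.mul_sum, ← Finset.sum_add_distrib]
      exact Finset.sum_eq_zero fun j _ => by linear_combination c j * hP1 j
    have expand : a * q.eval (-1) + b * q.eval 1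
        = (a * (∑ j, c j * (P j).eval (-1)) + b * (∑ j, c j * (P j).eval 1))
          + (a * (cM1 * ((-1) / (b - a)) + cM2 * (1 / 2 - (a + b) * (-1) / (2 * (b - a))))
             + b * (cM1 * (1 / (b - a)) + cM2 * (1 / 2 - (a + b) * 1 / (2 * (b - a))))) := by
      rw [key (-1), key 1]; ring
    rw [expand, h1, zero_add]
    field_simp
    ring
  · -- integral functional
    have hxint : (∫ x in (-1:ℝ)..1, x) = 0 := by
      rw [integral_id]; norm_num
    have hPint : ∀ j, (∫ x in (-1:ℝ)..1, (P j).eval x) = 0 := by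
      intro j
      have h2 : (∫ x in (-1:ℝ)..1, (Fint (Fint (ℓ j))).eval x)
          = (Fint (Fint (Fint (ℓ j)))).eval 1 := (eval_Fint _ 1).symm
      have hrw : ∀ x : ℝ, (P j).eval x = (Fint (Fint (ℓ j))).eval x +
          (((a + b) * be j / (2 * (b - a)) - b * al j / (b - a)) * x + (- (be j / 2))) := by
        intro x
        simp only [hP, eval_add, eval_sub, eval_mul, eval_C, eval_X]
        ring
      rw [intervalIntegral.integral_congr (g := fun x => (Fint (Fint (ℓ j))).eval x +
          (((a + b) * be j / (2 * (b - a)) - b * al j / (b - a)) * x + (- (be j / 2))))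
          (fun x _ => hrw x)]
      have i1 : IntervalIntegrable (fun x : ℝ => (Fint (Fint (ℓ j))).eval x)
          MeasureTheory.volume (-1 : ℝ) 1 := (Fint (Fint (ℓ j))).continuous.intervalIntegrable _ _
      have i2 : IntervalIntegrable (fun x : ℝ =>
          ((a + b) * be j / (2 * (b - a)) - b * al j / (b - a)) * x + (- (be j / 2)))
          MeasureTheory.volume (-1 : ℝ) 1 :=
        ((continuous_const.mul continuous_id).add continuous_const).intervalIntegrable _ _
      have i3 : IntervalIntegrable (fun x : ℝ =>
          ((a + b) * be j / (2 * (b - a)) - b * al j / (b - a)) * x)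
          MeasureTheory.volume (-1 : ℝ) 1 :=
        (continuous_const.mul continuous_id).intervalIntegrable _ _
      have i4 : IntervalIntegrable (fun _ : ℝ => - (be j / 2))
          MeasureTheory.volume (-1 : ℝ) 1 := continuous_const.intervalIntegrable _ _
      rw [intervalIntegral.integral_add i1 i2, intervalIntegral.integral_add i3 i4,
        intervalIntegral.integral_const_mul, integral_id,
        intervalIntegral.integral_const, h2]
      rw [hbe]
      norm_num
      ring
    have hint1 : IntervalIntegrable (fun x => ∑ j, c j * (P j).eval x)
        MeasureTheory.volume (-1 : ℝ) 1 :=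
      (continuous_finset_sum _ fun j _ =>
        continuous_const.mul (P j).continuous).intervalIntegrable _ _
    have hint2 : IntervalIntegrable
        (fun x => cM1 * (x / (b - a)) + cM2 * (1 / 2 - (a + b) * x / (2 * (b - a))))
        MeasureTheory.volume (-1 : ℝ) 1 := by
      apply Continuous.intervalIntegrable
      fun_prop
    have hlin : (∫ x in (-1:ℝ)..1,
        (cM1 * (x / (b - a)) + cM2 * (1 / 2 - (a + b) * x / (2 * (b - a))))) = cM2 := by
      have hrw : ∀ x : ℝ, cM1 * (x / (b - a)) + cM2 * (1 / 2 - (a + b) * x / (2 * (b - a)))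
          = (cM1 / (b - a) - cM2 * (a + b) / (2 * (b - a))) * x + cM2 / 2 := by
        intro x; ring
      rw [intervalIntegral.integral_congr
        (g := fun x => (cM1 / (b - a) - cM2 * (a + b) / (2 * (b - a))) * x + cM2 / 2)
        (fun x _ => hrw x)]
      have i3 : IntervalIntegrable (fun x : ℝ =>
          (cM1 / (b - a) - cM2 * (a + b) / (2 * (b - a))) * x)
          MeasureTheory.volume (-1 : ℝ) 1 :=
        (continuous_const.mul continuous_id).intervalIntegrable _ _
      have i4 : IntervalIntegrable (fun _ : ℝ => cM2 / 2)
          MeasureTheory.volume (-1 : ℝ) 1 := continuous_const.intervalIntegrable _ _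
      rw [intervalIntegral.integral_add i3 i4, intervalIntegral.integral_const_mul,
        integral_id, intervalIntegral.integral_const]
      norm_num
      ring
    calc (∫ x in (-1:ℝ)..1, q.eval x)
        = ∫ x in (-1:ℝ)..1, ((∑ j, c j * (P j).eval x) +
            (cM1 * (x / (b - a)) + cM2 * (1 / 2 - (a + b) * x / (2 * (b - a))))) :=
          intervalIntegral.integral_congr fun x _ => key x
      _ = (∫ x in (-1:ℝ)..1, ∑ j, c j * (P j).eval x) +
          (∫ x in (-1:ℝ)..1,
            (cM1 * (x / (b - a)) + cM2 * (1 / 2 - (a + b) * x / (2 * (b - a))))) :=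
          intervalIntegral.integral_add hint1 hint2
      _ = cM2 := by
          rw [intervalIntegral.integral_finset_sum (f := fun j x => c j * (P j).eval x) (fun j _ =>
            (continuous_const.mul (P j).continuous).intervalIntegrable _ _)]
          simp only [intervalIntegral.integral_const_mul, hPint, mul_zero,
            Finset.sum_const_zero, zero_add]
          exact hlin
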